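/- arXiv:2212.09887 — 2 statements merged into one kernel-verified Lean document; each statement's English description precedes it below -/
import Mathlib

section
/- (Theorem 1, tracking form.) Assume A_q = exp(hH) and that Q − P + A_qᵀ P A_q is negative definite. Then along every quantized MPC closed-loop trajectory (x_q(k), r(k), U*(k)) the tracking error converges to zero: ‖x_q(k) − r(k)‖ → 0 as k → ∞, and moreover the applied inputs converge to zero: u*_0(k) → 0. -/
open Matrix Filter Topology

/-- Predicted states of the quantized system: `x₀ = x`, `x_{i+1} = A_q x_i + h B_q u_i`
(inputs beyond the horizon are taken to be `0`, but they are never used below). -/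
noncomputable def predState {n m N : ℕ} (Aq : Matrix (Fin n) (Fin n) ℝ)
    (Bq : Matrix (Fin n) (Fin m) ℝ) (h : ℝ) (x : Fin n → ℝ)
    (U : Fin N → Fin m → ℝ) : ℕ → (Fin n → ℝ)
  | 0 => x
  | i + 1 => Aq *ᵥ (predState Aq Bq h x U i) +
      h • (Bq *ᵥ (if hi : i < N then U ⟨i, hi⟩ else 0))

/-- Reference states: `r_i = (exp (h H))^i r`. -/
noncomputable def refState {n : ℕ} (H : Matrix (Fin n) (Fin n) ℝ) (h : ℝ)
    (r : Fin n → ℝ) (i : ℕ) : Fin n → ℝ :=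
  ((NormedSpace.exp (h • H)) ^ i) *ᵥ r

/-- The MPC cost
`J(x, r, U) = (x_N - r_N)ᵀ P (x_N - r_N) + Σ_{i<N} [(x_i - r_i)ᵀ Q (x_i - r_i) + u_iᵀ R u_i]`. -/
noncomputable def mpcCost {n m N : ℕ} (Aq : Matrix (Fin n) (Fin n) ℝ)
    (Bq : Matrix (Fin n) (Fin m) ℝ) (H : Matrix (Fin n) (Fin n) ℝ) (h : ℝ)
    (P Q : Matrix (Fin n) (Fin n) ℝ) (R : Matrix (Fin m) (Fin m) ℝ)
    (x r : Fin n → ℝ) (U : Fin N → Fin m → ℝ) : ℝ :=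
  (predState Aq Bq h x U N - refState H h r N) ⬝ᵥ
      (P *ᵥ (predState Aq Bq h x U N - refState H h r N)) +
    ∑ i : Fin N,
      ((predState Aq Bq h x U i - refState H h r i) ⬝ᵥ
          (Q *ᵥ (predState Aq Bq h x U i - refState H h r i)) +
        (U i) ⬝ᵥ (R *ᵥ (U i)))

/-- The quantized input set `𝒰^N` with `𝒰 = {-1,0,1}^m`. -/
def quantSet (m N : ℕ) : Set (Fin N → Fin m → ℝ) :=
  {U | ∀ i j, U i j = -1 ∨ U i j = 0 ∨ U i j = 1}

/-- The value function `V(x,r) = min_{U ∈ 𝒰^N} J(x,r,U)`. -/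
noncomputable def valueFn {n m N : ℕ} (Aq : Matrix (Fin n) (Fin n) ℝ)
    (Bq : Matrix (Fin n) (Fin m) ℝ) (H : Matrix (Fin n) (Fin n) ℝ) (h : ℝ)
    (P Q : Matrix (Fin n) (Fin n) ℝ) (R : Matrix (Fin m) (Fin m) ℝ)
    (x r : Fin n → ℝ) : ℝ :=
  sInf ((fun U => mpcCost Aq Bq H h P Q R x r U) '' quantSet m N)

/-- The shifted input sequence: drop `u₀` and append `0`. -/
def shiftSeq {m N : ℕ} (U : Fin N → Fin m → ℝ) : Fin N → Fin m → ℝ :=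
  fun i => if hi : (i : ℕ) + 1 < N then U ⟨(i : ℕ) + 1, hi⟩ else 0

/- ---------------- Auxiliary lemmas ---------------- -/

section Aux

variable {n m N : ℕ}

lemma dot_shift (A : Matrix (Fin n) (Fin n) ℝ) (v w : Fin n → ℝ) :
    (A *ᵥ v) ⬝ᵥ w = v ⬝ᵥ (Aᵀ *ᵥ w) := by
  rw [mulVec_transpose, dotProduct_comm, dotProduct_mulVec, dotProduct_comm]

lemma quad_homog (M : Matrix (Fin n) (Fin n) ℝ) (a : ℝ) (x : Fin n → ℝ) :
    (a • x) ⬝ᵥ M *ᵥ (a • x) = a ^ 2 * (x ⬝ᵥ M *ᵥ x) := by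
  rw [mulVec_smul, dotProduct_smul, smul_dotProduct, smul_eq_mul, smul_eq_mul]; ring

lemma quad_nonneg {M : Matrix (Fin n) (Fin n) ℝ} (hM : M.PosSemidef) (x : Fin n → ℝ) :
    0 ≤ x ⬝ᵥ M *ᵥ x := by simpa using hM.dotProduct_mulVec_nonneg x

lemma posdef_lower {M : Matrix (Fin n) (Fin n) ℝ} (hM : M.PosDef) :
    ∃ c > 0, ∀ x : Fin n → ℝ, c * ‖x‖ ^ 2 ≤ x ⬝ᵥ M *ᵥ x := by
  rcases Nat.eq_zero_or_pos n with h0 | hn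
  · refine ⟨1, one_pos, fun x => ?_⟩
    subst h0
    have hx : x = 0 := Subsingleton.elim _ _
    calc 1 * ‖x‖ ^ 2 = 0 := by rw [hx, norm_zero]; ring
      _ ≤ x ⬝ᵥ M *ᵥ x := quad_nonneg hM.posSemidef x
  · haveI : Nonempty (Fin n) := ⟨⟨0, hn⟩⟩
    have hcont : Continuous fun x : Fin n → ℝ => x ⬝ᵥ M *ᵥ x :=
      continuous_id.dotProduct (continuous_const.matrix_mulVec continuous_id)
    have hne : (Metric.sphere (0 : Fin n → ℝ) 1).Nonempty :=
      NormedSpace.sphere_nonempty.mpr zero_le_one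
    obtain ⟨x₀, hx₀S, hx₀min⟩ :=
      (isCompact_sphere (0 : Fin n → ℝ) 1).exists_isMinOn hne hcont.continuousOn
    have hx₀norm : ‖x₀‖ = 1 := by simpa using hx₀S
    have hx₀ne : x₀ ≠ 0 := by
      intro h; rw [h] at hx₀norm; simp at hx₀norm
    refine ⟨x₀ ⬝ᵥ M *ᵥ x₀, by simpa using hM.dotProduct_mulVec_pos hx₀ne, fun x => ?_⟩
    rcases eq_or_ne x 0 with rfl | hx
    · simp
    · have hnx : ‖x‖ ≠ 0 := norm_ne_zero_iff.mpr hx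
      set u : Fin n → ℝ := ‖x‖⁻¹ • x with hu
      have hunorm : u ∈ Metric.sphere (0 : Fin n → ℝ) 1 := by
        simp [hu, norm_smul, abs_of_nonneg (inv_nonneg.mpr (norm_nonneg x)),
          inv_mul_cancel₀ hnx]
      have hxu : x = ‖x‖ • u := by
        rw [hu, smul_smul, mul_inv_cancel₀ hnx, one_smul]
      have hmc : x₀ ⬝ᵥ M *ᵥ x₀ ≤ u ⬝ᵥ M *ᵥ u := hx₀min hunorm
      have hxq : x ⬝ᵥ M *ᵥ x = ‖x‖ ^ 2 * (u ⬝ᵥ M *ᵥ u) := by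
        conv_lhs => rw [hxu]
        rw [quad_homog]
      calc (x₀ ⬝ᵥ M *ᵥ x₀) * ‖x‖ ^ 2 ≤ (u ⬝ᵥ M *ᵥ u) * ‖x‖ ^ 2 :=
            mul_le_mul_of_nonneg_right hmc (by positivity)
        _ = x ⬝ᵥ M *ᵥ x := by rw [hxq]; ring

lemma refState_zero (H : Matrix (Fin n) (Fin n) ℝ) (h : ℝ) (i : ℕ) :
    refState H h (0 : Fin n → ℝ) i = 0 := by simp [refState]

lemma err_state (Aq : Matrix (Fin n) (Fin n) ℝ) (Bq : Matrix (Fin n) (Fin m) ℝ)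
    (H : Matrix (Fin n) (Fin n) ℝ) (h : ℝ) (hA : Aq = NormedSpace.exp (h • H))
    (x r : Fin n → ℝ) (U : Fin N → Fin m → ℝ) (i : ℕ) :
    predState Aq Bq h x U i - refState H h r i = predState Aq Bq h (x - r) U i := by
  induction i with
  | zero => simp [predState, refState]
  | succ i ih =>
    have href : refState H h r (i + 1) = Aq *ᵥ refState H h r i := by
      rw [hA, refState, refState, pow_succ', ← mulVec_mulVec]
    simp only [predState, href, ← ih, mulVec_sub]
    abel

lemma cost_err (Aq : Matrix (Fin n) (Fin n) ℝ) (Bq : Matrix (Fin n) (Fin m) ℝ)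
    (H : Matrix (Fin n) (Fin n) ℝ) (h : ℝ) (P Q : Matrix (Fin n) (Fin n) ℝ)
    (R : Matrix (Fin m) (Fin m) ℝ) (hA : Aq = NormedSpace.exp (h • H))
    (x r : Fin n → ℝ) (U : Fin N → Fin m → ℝ) :
    mpcCost Aq Bq H h P Q R x r U = mpcCost Aq Bq H h P Q R (x - r) 0 U := by
  unfold mpcCost
  simp only [refState_zero, sub_zero, err_state Aq Bq H h hA x r U]

lemma predState_shift (hN : 0 < N) (Aq : Matrix (Fin n) (Fin n) ℝ)
    (Bq : Matrix (Fin n) (Fin m) ℝ) (h : ℝ) (e : Fin n → ℝ) (U : Fin N → Fin m → ℝ)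
    (i : ℕ) :
    predState Aq Bq h (Aq *ᵥ e + h • (Bq *ᵥ U ⟨0, hN⟩)) (shiftSeq U) i =
      predState Aq Bq h e U (i + 1) := by
  induction i with
  | zero => simp [predState, dif_pos hN]
  | succ i ih =>
    have hin : (if hi : i < N then shiftSeq U ⟨i, hi⟩ else 0) =
        (if hi : i + 1 < N then U ⟨i + 1, hi⟩ else 0) := by
      by_cases hi : i < N
      · rw [dif_pos hi]
        by_cases h1 : i + 1 < N
        · simp [shiftSeq, h1]
        · simp [shiftSeq, h1]
      · rw [dif_neg hi, dif_neg (by omega : ¬ i + 1 < N)]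
    simp only [predState, ih, hin]

lemma shift_cost (hN : 0 < N) (Aq : Matrix (Fin n) (Fin n) ℝ)
    (Bq : Matrix (Fin n) (Fin m) ℝ) (H : Matrix (Fin n) (Fin n) ℝ) (h : ℝ)
    (P Q : Matrix (Fin n) (Fin n) ℝ) (R : Matrix (Fin m) (Fin m) ℝ)
    (e : Fin n → ℝ) (U : Fin N → Fin m → ℝ) :
    mpcCost Aq Bq H h P Q R (Aq *ᵥ e + h • (Bq *ᵥ U ⟨0, hN⟩)) 0 (shiftSeq U) =
      mpcCost Aq Bq H h P Q R e 0 U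
        - (e ⬝ᵥ Q *ᵥ e + U ⟨0, hN⟩ ⬝ᵥ R *ᵥ U ⟨0, hN⟩)
        + (predState Aq Bq h e U N) ⬝ᵥ
            ((Q - P + Aqᵀ * P * Aq) *ᵥ (predState Aq Bq h e U N)) := by
  classical
  set p : ℕ → Fin n → ℝ := predState Aq Bq h e U with hp
  set u : ℕ → Fin m → ℝ := fun i => if hi : i < N then U ⟨i, hi⟩ else 0 with hu
  set F : ℕ → ℝ := fun i => p i ⬝ᵥ Q *ᵥ p i + u i ⬝ᵥ R *ᵥ u i with hF
  have hq : ∀ i, predState Aq Bq h (Aq *ᵥ e + h • (Bq *ᵥ U ⟨0, hN⟩)) (shiftSeq U) i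
      = p (i + 1) := predState_shift hN Aq Bq h e U
  have hUu : ∀ i : Fin N, U i = u (i : ℕ) := by
    intro i; simp [hu, i.isLt]
  have hsu : ∀ i : Fin N, shiftSeq U i = u ((i : ℕ) + 1) := by
    intro i
    by_cases h1 : (i : ℕ) + 1 < N
    · simp [shiftSeq, hu, h1]
    · simp [shiftSeq, hu, h1]
  have claim1 : mpcCost Aq Bq H h P Q R e 0 U =
      p N ⬝ᵥ P *ᵥ p N + ∑ i ∈ Finset.range N, F i := by
    unfold mpcCost
    simp only [refState_zero, sub_zero, ← hp]
    congr 1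
    rw [← Fin.sum_univ_eq_sum_range F N]
    refine Finset.sum_congr rfl fun i _ => ?_
    rw [hF, hUu i]
  have claim2 : mpcCost Aq Bq H h P Q R (Aq *ᵥ e + h • (Bq *ᵥ U ⟨0, hN⟩)) 0 (shiftSeq U) =
      (Aq *ᵥ p N) ⬝ᵥ P *ᵥ (Aq *ᵥ p N) + ∑ i ∈ Finset.range N, F (i + 1) := by
    unfold mpcCost
    simp only [refState_zero, sub_zero, hq]
    congr 1
    · have hpN1 : p (N + 1) = Aq *ᵥ p N := by
        rw [hp]
        show Aq *ᵥ predState Aq Bq h e U N +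
            h • (Bq *ᵥ (if hi : N < N then U ⟨N, hi⟩ else 0)) = _
        rw [dif_neg (lt_irrefl N), mulVec_zero, smul_zero, add_zero]
      rw [hpN1]
    · rw [← Fin.sum_univ_eq_sum_range (fun i => F (i + 1)) N]
      refine Finset.sum_congr rfl fun i _ => ?_
      rw [hF, hsu i]
  have hsum : ∑ i ∈ Finset.range N, F (i + 1) =
      ∑ i ∈ Finset.range N, F i + F N - F 0 := by
    have h1 := Finset.sum_range_succ' F N
    have h2 := Finset.sum_range_succ F N
    linarith
  have hFN : F N = p N ⬝ᵥ Q *ᵥ p N := by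
    have huN : u N = 0 := by rw [hu]; exact dif_neg (lt_irrefl N)
    rw [hF]; simp [huN]
  have hF0 : F 0 = e ⬝ᵥ Q *ᵥ e + U ⟨0, hN⟩ ⬝ᵥ R *ᵥ U ⟨0, hN⟩ := by
    have hu0 : u 0 = U ⟨0, hN⟩ := by rw [hu]; exact dif_pos hN
    have hp0 : p 0 = e := rfl
    simp only [hF]
    rw [hu0, hp0]
  have htr : (Aq *ᵥ p N) ⬝ᵥ P *ᵥ (Aq *ᵥ p N) = p N ⬝ᵥ ((Aqᵀ * P * Aq) *ᵥ p N) := by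
    rw [dot_shift, mulVec_mulVec, mulVec_mulVec, Matrix.mul_assoc]
  have hexp : p N ⬝ᵥ ((Q - P + Aqᵀ * P * Aq) *ᵥ p N) =
      p N ⬝ᵥ Q *ᵥ p N - p N ⬝ᵥ P *ᵥ p N + p N ⬝ᵥ ((Aqᵀ * P * Aq) *ᵥ p N) := by
    rw [add_mulVec, sub_mulVec, dotProduct_add, dotProduct_sub]
  rw [claim2, claim1, hsum, hFN, hF0, htr, hexp]
  ring

end Aux

/-- Theorem 1, tracking form: along any quantized MPC closed-loop trajectory,
the tracking error `x_q(k) - r(k)` tends to `0` and the applied inputs tend to `0`. -/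
theorem stmt4 {n m N : ℕ} (hN : 0 < N) (h : ℝ) (hh : 0 < h)
    (Aq H : Matrix (Fin n) (Fin n) ℝ) (Bq : Matrix (Fin n) (Fin m) ℝ)
    (P Q : Matrix (Fin n) (Fin n) ℝ) (R : Matrix (Fin m) (Fin m) ℝ)
    (hP : P.PosDef) (hQ : Q.PosDef) (hR : R.PosDef)
    (hA : Aq = NormedSpace.exp (h • H))
    (hneg : (-(Q - P + Aqᵀ * P * Aq)).PosDef)
    (xq r : ℕ → (Fin n → ℝ)) (Ustar : ℕ → (Fin N → Fin m → ℝ))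
    (hmem : ∀ k, Ustar k ∈ quantSet m N)
    (hmin : ∀ k, ∀ U ∈ quantSet m N,
      mpcCost Aq Bq H h P Q R (xq k) (r k) (Ustar k) ≤
        mpcCost Aq Bq H h P Q R (xq k) (r k) U)
    (hx : ∀ k, xq (k + 1) = Aq *ᵥ xq k + h • (Bq *ᵥ Ustar k ⟨0, hN⟩))
    (hr : ∀ k, r (k + 1) = NormedSpace.exp (h • H) *ᵥ r k) :
    Filter.Tendsto (fun k => xq k - r k) Filter.atTop (nhds 0) ∧
      Filter.Tendsto (fun k => Ustar k ⟨0, hN⟩) Filter.atTop (nhds 0) := by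
  classical
  set E : ℕ → Fin n → ℝ := fun k => xq k - r k with hE
  set u0 : ℕ → Fin m → ℝ := fun k => Ustar k ⟨0, hN⟩ with hu0
  have herr : ∀ k, E (k + 1) = Aq *ᵥ E k + h • (Bq *ᵥ u0 k) := by
    intro k
    show xq (k + 1) - r (k + 1) = Aq *ᵥ (xq k - r k) + h • (Bq *ᵥ Ustar k ⟨0, hN⟩)
    rw [hx k, hr k, ← hA, mulVec_sub]
    abel
  set V : ℕ → ℝ := fun k => mpcCost Aq Bq H h P Q R (E k) 0 (Ustar k) with hV
  set D : ℕ → ℝ := fun k => E k ⬝ᵥ Q *ᵥ E k + u0 k ⬝ᵥ R *ᵥ u0 k with hD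
  have hD0 : ∀ k, 0 ≤ D k := fun k =>
    add_nonneg (quad_nonneg hQ.posSemidef _) (quad_nonneg hR.posSemidef _)
  have hshiftmem : ∀ k, shiftSeq (Ustar k) ∈ quantSet m N := by
    intro k i j
    unfold shiftSeq
    by_cases h1 : (i : ℕ) + 1 < N
    · rw [dif_pos h1]; exact hmem k _ j
    · rw [dif_neg h1]; exact Or.inr (Or.inl rfl)
  have hdesc : ∀ k, V (k + 1) ≤ V k - D k := by
    intro k
    have h1 : V (k + 1) ≤ mpcCost Aq Bq H h P Q R (E (k + 1)) 0 (shiftSeq (Ustar k)) := by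
      have := hmin (k + 1) (shiftSeq (Ustar k)) (hshiftmem k)
      rw [cost_err Aq Bq H h P Q R hA (xq (k + 1)) (r (k + 1)) (Ustar (k + 1)),
        cost_err Aq Bq H h P Q R hA (xq (k + 1)) (r (k + 1)) (shiftSeq (Ustar k))] at this
      simpa only [hV, hE] using this
    have h2 : mpcCost Aq Bq H h P Q R (E (k + 1)) 0 (shiftSeq (Ustar k)) =
        V k - D k + (predState Aq Bq h (E k) (Ustar k) N) ⬝ᵥ
          ((Q - P + Aqᵀ * P * Aq) *ᵥ (predState Aq Bq h (E k) (Ustar k) N)) := by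
      rw [herr k]
      exact shift_cost hN Aq Bq H h P Q R (E k) (Ustar k)
    have h3 : (predState Aq Bq h (E k) (Ustar k) N) ⬝ᵥ
        ((Q - P + Aqᵀ * P * Aq) *ᵥ (predState Aq Bq h (E k) (Ustar k) N)) ≤ 0 := by
      have := quad_nonneg hneg.posSemidef (predState Aq Bq h (E k) (Ustar k) N)
      rw [neg_mulVec, dotProduct_neg] at this
      linarith
    linarith
  have hV0 : ∀ k, 0 ≤ V k := by
    intro k
    refine add_nonneg (quad_nonneg hP.posSemidef _)
      (Finset.sum_nonneg fun i _ =>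
        add_nonneg (quad_nonneg hQ.posSemidef _) (quad_nonneg hR.posSemidef _))
  have hanti : Antitone V := antitone_nat_of_succ_le fun k => by
    have := hdesc k; have := hD0 k; linarith
  have hbdd : BddBelow (Set.range V) := ⟨0, by rintro x ⟨k, rfl⟩; exact hV0 k⟩
  have hVconv : Tendsto V atTop (nhds (⨅ k, V k)) := tendsto_atTop_ciInf hanti hbdd
  have hVdiff : Tendsto (fun k => V k - V (k + 1)) atTop (nhds 0) := by
    have h2 : Tendsto (fun k => V (k + 1)) atTop (nhds (⨅ k, V k)) :=
      hVconv.comp (tendsto_add_atTop_nat 1)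
    simpa using hVconv.sub h2
  have hDto : Tendsto D atTop (nhds 0) :=
    squeeze_zero hD0 (fun k => by have := hdesc k; linarith) hVdiff
  have hQEto : Tendsto (fun k => E k ⬝ᵥ Q *ᵥ E k) atTop (nhds 0) :=
    squeeze_zero (fun k => quad_nonneg hQ.posSemidef _)
      (fun k => le_add_of_nonneg_right (quad_nonneg hR.posSemidef _)) hDto
  have hRUto : Tendsto (fun k => u0 k ⬝ᵥ R *ᵥ u0 k) atTop (nhds 0) :=
    squeeze_zero (fun k => quad_nonneg hR.posSemidef _)
      (fun k => le_add_of_nonneg_left (quad_nonneg hQ.posSemidef _)) hDto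
  -- generic: quadratic form of a PosDef matrix tending to 0 forces argument to 0
  have key : ∀ {d : ℕ} (M : Matrix (Fin d) (Fin d) ℝ), M.PosDef →
      ∀ (f : ℕ → Fin d → ℝ), Tendsto (fun k => f k ⬝ᵥ M *ᵥ f k) atTop (nhds 0) →
        Tendsto f atTop (nhds 0) := by
    intro d M hM f hf
    obtain ⟨c, hc, hcl⟩ := posdef_lower hM
    rw [tendsto_zero_iff_norm_tendsto_zero]
    have hsq : Tendsto (fun k => ‖f k‖ ^ 2) atTop (nhds 0) := by
      have h1 : Tendsto (fun k => c⁻¹ * (f k ⬝ᵥ M *ᵥ f k)) atTop (nhds 0) := by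
        simpa using hf.const_mul c⁻¹
      refine squeeze_zero (fun k => by positivity) (fun k => ?_) h1
      have h2 : c * ‖f k‖ ^ 2 ≤ f k ⬝ᵥ M *ᵥ f k := hcl (f k)
      calc ‖f k‖ ^ 2 = c⁻¹ * (c * ‖f k‖ ^ 2) := by
            rw [inv_mul_cancel_left₀ (ne_of_gt hc)]
        _ ≤ c⁻¹ * (f k ⬝ᵥ M *ᵥ f k) :=
          mul_le_mul_of_nonneg_left h2 (inv_nonneg.mpr hc.le)
    have : Tendsto (fun k => Real.sqrt (‖f k‖ ^ 2)) atTop (nhds (Real.sqrt 0)) :=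
      (Real.continuous_sqrt.tendsto 0).comp hsq
    simpa [Real.sqrt_sq (norm_nonneg _)] using this
  exact ⟨key Q hQ E hQEto, key R hR u0 hRUto⟩
end

section
/- (Theorem 1, strict decrease form.) Assume A_q = exp(hH) and that Q − P + A_qᵀ P A_q is negative definite. Then along every quantized MPC closed-loop trajectory (x_q(k), r(k), U*(k)), for each k either V(x_q(k+1), r(k+1)) < V(x_q(k), r(k)) or V(x_q(k), r(k)) = 0; and if V(x_q(k), r(k)) = 0 for some k, then V(x_q(j), r(j)) = 0 for all j ≥ k. -/
open Matrix Filter Topology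

section Aux

open Matrix NormedSpace

variable {n m N : ℕ}

lemma quadNonneg {ι : Type*} [Fintype ι] {M : Matrix ι ι ℝ} (hM : M.PosSemidef)
    (x : ι → ℝ) : 0 ≤ x ⬝ᵥ (M *ᵥ x) := by
  simpa using hM.re_dotProduct_nonneg x

lemma quadPos {ι : Type*} [Fintype ι] {M : Matrix ι ι ℝ} (hM : M.PosDef)
    {x : ι → ℝ} (hx : x ≠ 0) : 0 < x ⬝ᵥ (M *ᵥ x) := by
  simpa using hM.re_dotProduct_pos hx

lemma zero_mem_quantSet : (0 : Fin N → Fin m → ℝ) ∈ quantSet m N :=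
  fun _ _ => Or.inr (Or.inl rfl)

lemma shiftSeq_mem_quantSet {U : Fin N → Fin m → ℝ} (hU : U ∈ quantSet m N) :
    shiftSeq U ∈ quantSet m N := by
  intro i j
  unfold shiftSeq
  by_cases hi : (i : ℕ) + 1 < N
  · simp only [dif_pos hi]; exact hU _ j
  · simp [dif_neg hi]

variable (Aq H : Matrix (Fin n) (Fin n) ℝ) (Bq : Matrix (Fin n) (Fin m) ℝ)
  (P Q : Matrix (Fin n) (Fin n) ℝ) (R : Matrix (Fin m) (Fin m) ℝ) (h : ℝ)

lemma mpcCost_nonneg (hP : P.PosDef) (hQ : Q.PosDef) (hR : R.PosDef)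
    (x r : Fin n → ℝ) (U : Fin N → Fin m → ℝ) :
    0 ≤ mpcCost Aq Bq H h P Q R x r U := by
  refine add_nonneg (quadNonneg hP.posSemidef _) (Finset.sum_nonneg fun i _ =>
    add_nonneg (quadNonneg hQ.posSemidef _) (quadNonneg hR.posSemidef _))

lemma valueFn_nonneg (hP : P.PosDef) (hQ : Q.PosDef) (hR : R.PosDef) (x r : Fin n → ℝ) :
    0 ≤ valueFn (N := N) Aq Bq H h P Q R x r := by
  refine le_csInf ⟨_, ⟨0, zero_mem_quantSet, rfl⟩⟩ ?_
  rintro y ⟨U, -, rfl⟩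
  exact mpcCost_nonneg Aq H Bq P Q R h hP hQ hR x r U

lemma valueFn_le (hP : P.PosDef) (hQ : Q.PosDef) (hR : R.PosDef) (x r : Fin n → ℝ)
    {U : Fin N → Fin m → ℝ} (hU : U ∈ quantSet m N) :
    valueFn (N := N) Aq Bq H h P Q R x r ≤ mpcCost Aq Bq H h P Q R x r U := by
  refine csInf_le ⟨0, ?_⟩ ⟨U, hU, rfl⟩
  rintro y ⟨V, -, rfl⟩
  exact mpcCost_nonneg Aq H Bq P Q R h hP hQ hR x r V

lemma predState_zero_input (hA : Aq = NormedSpace.exp (h • H)) (r : Fin n → ℝ) (i : ℕ) :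
    predState (N := N) Aq Bq h r 0 i = refState H h r i := by
  induction i with
  | zero => simp [predState, refState]
  | succ i ih =>
      have : (if hi : i < N then (0 : Fin N → Fin m → ℝ) ⟨i, hi⟩ else 0) = 0 := by
        split <;> rfl
      simp only [predState, this, mulVec_zero, smul_zero, add_zero, ih, refState,
        mulVec_mulVec]
      rw [hA, ← pow_succ']

lemma valueFn_self (hA : Aq = NormedSpace.exp (h • H)) (hP : P.PosDef) (hQ : Q.PosDef)
    (hR : R.PosDef) (r : Fin n → ℝ) :
    valueFn (N := N) Aq Bq H h P Q R r r = 0 := by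
  have hcost : mpcCost (N := N) Aq Bq H h P Q R r r 0 = 0 := by
    have hp := predState_zero_input (N := N) Aq H Bq h hA r
    simp [mpcCost, hp, sub_self]
  refine le_antisymm ?_ (valueFn_nonneg Aq H Bq P Q R h hP hQ hR r r)
  calc valueFn (N := N) Aq Bq H h P Q R r r ≤ _ :=
        valueFn_le Aq H Bq P Q R h hP hQ hR r r zero_mem_quantSet
    _ = 0 := hcost

end Aux

section Step

open Matrix NormedSpace

variable {n m N : ℕ}

lemma sumShift (N : ℕ) (f : ℕ → ℝ) :
    ∑ i : Fin N, f ((i : ℕ) + 1) = ∑ i : Fin N, f (i : ℕ) + f N - f 0 := by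
  rw [Fin.sum_univ_eq_sum_range (fun i => f (i + 1)), Fin.sum_univ_eq_sum_range (fun i => f i)]
  have h1 := Finset.sum_range_succ f N
  have h2 := Finset.sum_range_succ' f N
  linarith

lemma mpcCost_shift (hN : 0 < N) (h : ℝ)
    (Aq H : Matrix (Fin n) (Fin n) ℝ) (Bq : Matrix (Fin n) (Fin m) ℝ)
    (P Q : Matrix (Fin n) (Fin n) ℝ) (R : Matrix (Fin m) (Fin m) ℝ)
    (hR : R.PosDef)
    (hA : Aq = NormedSpace.exp (h • H))
    (hneg : (-(Q - P + Aqᵀ * P * Aq)).PosDef)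
    (x r : Fin n → ℝ) (U : Fin N → Fin m → ℝ) :
    mpcCost Aq Bq H h P Q R (Aq *ᵥ x + h • (Bq *ᵥ U ⟨0, hN⟩)) (NormedSpace.exp (h • H) *ᵥ r)
        (shiftSeq U) ≤
      mpcCost Aq Bq H h P Q R x r U - (x - r) ⬝ᵥ (Q *ᵥ (x - r)) := by
  set x' : Fin n → ℝ := Aq *ᵥ x + h • (Bq *ᵥ U ⟨0, hN⟩) with hx'
  have hin : ∀ i : ℕ, (if hi : i < N then shiftSeq U ⟨i, hi⟩ else 0) =
      (if hi : i + 1 < N then U ⟨i + 1, hi⟩ else 0) := by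
    intro i
    by_cases hi : i < N
    · simp only [dif_pos hi, shiftSeq]
    · have hi2 : ¬(i + 1 < N) := fun hc => hi (Nat.lt_of_succ_lt hc)
      simp [dif_neg hi, dif_neg hi2]
  have hpred : ∀ i : ℕ, predState Aq Bq h x' (shiftSeq U) i = predState Aq Bq h x U (i + 1) := by
    intro i
    induction i with
    | zero => simp [predState, dif_pos hN, hx']
    | succ i ih =>
        show Aq *ᵥ predState Aq Bq h x' (shiftSeq U) i + _ = _
        rw [ih, hin i]
        rfl
  have href : ∀ i : ℕ, refState H h (NormedSpace.exp (h • H) *ᵥ r) i = refState H h r (i + 1) := by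
    intro i
    simp [refState, mulVec_mulVec, ← pow_succ]
  set F : ℕ → ℝ := fun j => (predState Aq Bq h x U j - refState H h r j) ⬝ᵥ
      (Q *ᵥ (predState Aq Bq h x U j - refState H h r j)) with hF
  set G : ℕ → ℝ := fun j => (if hj : j < N then U ⟨j, hj⟩ else 0) ⬝ᵥ
      (R *ᵥ (if hj : j < N then U ⟨j, hj⟩ else 0)) with hG
  have hGs : ∀ i : Fin N, (shiftSeq U i) ⬝ᵥ (R *ᵥ shiftSeq U i) = G ((i : ℕ) + 1) := by
    intro i
    have : shiftSeq U i = (if hj : (i : ℕ) + 1 < N then U ⟨(i : ℕ) + 1, hj⟩ else 0) := rfl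
    rw [hG, this]
  have hUi : ∀ i : Fin N, (if hj : (i : ℕ) < N then U ⟨(i : ℕ), hj⟩ else 0) = U i := by
    intro i; rw [dif_pos i.isLt]
  set e : Fin n → ℝ := predState Aq Bq h x U N - refState H h r N with he
  -- cost of shifted problem
  have hterm : predState Aq Bq h x U (N + 1) = Aq *ᵥ predState Aq Bq h x U N := by
    show Aq *ᵥ _ + _ = _
    rw [dif_neg (lt_irrefl N)]
    simp
  have hrefN : refState H h r (N + 1) = Aq *ᵥ refState H h r N := by
    simp [refState, hA, mulVec_mulVec, pow_succ']
  have hcost' : mpcCost Aq Bq H h P Q R x' (NormedSpace.exp (h • H) *ᵥ r) (shiftSeq U) =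
      (Aq *ᵥ e) ⬝ᵥ (P *ᵥ (Aq *ᵥ e)) + ∑ i : Fin N, (F ((i : ℕ) + 1) + G ((i : ℕ) + 1)) := by
    unfold mpcCost
    rw [hpred N, href N, hterm, hrefN, ← mulVec_sub, ← he]
    congr 1
    refine Finset.sum_congr rfl fun i _ => ?_
    rw [hpred i, href i, hGs i, hF]
  have hcost : mpcCost Aq Bq H h P Q R x r U =
      e ⬝ᵥ (P *ᵥ e) + ∑ i : Fin N, (F (i : ℕ) + G (i : ℕ)) := by
    unfold mpcCost
    rw [← he]
    congr 1
    refine Finset.sum_congr rfl fun i _ => ?_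
    rw [hF, hG]
    simp only [hUi i]
  have hquad : (Aq *ᵥ e) ⬝ᵥ (P *ᵥ (Aq *ᵥ e)) = e ⬝ᵥ ((Aqᵀ * P * Aq) *ᵥ e) := by
    rw [mul_assoc, ← mulVec_mulVec, dotProduct_mulVec e, vecMul_transpose, ← mulVec_mulVec]
  have hnegq : e ⬝ᵥ (Q *ᵥ e) - e ⬝ᵥ (P *ᵥ e) + e ⬝ᵥ ((Aqᵀ * P * Aq) *ᵥ e) ≤ 0 := by
    have hexp : e ⬝ᵥ ((Q - P + Aqᵀ * P * Aq) *ᵥ e) =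
        e ⬝ᵥ (Q *ᵥ e) - e ⬝ᵥ (P *ᵥ e) + e ⬝ᵥ ((Aqᵀ * P * Aq) *ᵥ e) := by
      rw [add_mulVec, sub_mulVec, dotProduct_add, dotProduct_sub]
    by_cases hez : e = 0
    · simp [hez]
    · have := quadPos hneg hez
      rw [neg_mulVec, dotProduct_neg] at this
      linarith [hexp]
  -- split the shifted sum
  have hsplit : ∑ i : Fin N, (F ((i : ℕ) + 1) + G ((i : ℕ) + 1)) =
      (∑ i : Fin N, F (i : ℕ) + F N - F 0) + (∑ i : Fin N, G (i : ℕ) + G N - G 0) := by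
    rw [Finset.sum_add_distrib, sumShift N F, sumShift N G]
  have hGN : G N = 0 := by simp [hG, dif_neg (lt_irrefl N)]
  have hG0 : 0 ≤ G 0 := quadNonneg hR.posSemidef _
  have hFN : F N = e ⬝ᵥ (Q *ᵥ e) := by rw [hF]
  have hF0 : F 0 = (x - r) ⬝ᵥ (Q *ᵥ (x - r)) := by
    have h1 : predState Aq Bq h x U 0 = x := rfl
    have h2 : refState H h r 0 = r := by simp [refState]
    rw [hF]; simp only [h1, h2]
  rw [hcost', hcost, hsplit, hquad, ← hF0]
  have hsum : ∑ i : Fin N, (F (i : ℕ) + G (i : ℕ)) =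
      ∑ i : Fin N, F (i : ℕ) + ∑ i : Fin N, G (i : ℕ) := Finset.sum_add_distrib
  rw [hsum]
  linarith [hnegq, hGN, hG0, hFN.ge, hFN.le]

end Step

/-- Theorem 1, strict decrease form: along any quantized MPC closed-loop
trajectory, at each step the value function strictly decreases or is already zero; and once
it is zero it stays zero forever. -/
theorem stmt8 {n m N : ℕ} (hN : 0 < N) (h : ℝ) (hh : 0 < h)
    (Aq H : Matrix (Fin n) (Fin n) ℝ) (Bq : Matrix (Fin n) (Fin m) ℝ)
    (P Q : Matrix (Fin n) (Fin n) ℝ) (R : Matrix (Fin m) (Fin m) ℝ)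
    (hP : P.PosDef) (hQ : Q.PosDef) (hR : R.PosDef)
    (hA : Aq = NormedSpace.exp (h • H))
    (hneg : (-(Q - P + Aqᵀ * P * Aq)).PosDef)
    (xq r : ℕ → (Fin n → ℝ)) (Ustar : ℕ → (Fin N → Fin m → ℝ))
    (hmem : ∀ k, Ustar k ∈ quantSet m N)
    (hmin : ∀ k, ∀ U ∈ quantSet m N,
      mpcCost Aq Bq H h P Q R (xq k) (r k) (Ustar k) ≤
        mpcCost Aq Bq H h P Q R (xq k) (r k) U)
    (hx : ∀ k, xq (k + 1) = Aq *ᵥ xq k + h • (Bq *ᵥ Ustar k ⟨0, hN⟩))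
    (hr : ∀ k, r (k + 1) = NormedSpace.exp (h • H) *ᵥ r k) :
    (∀ k, valueFn (N := N) Aq Bq H h P Q R (xq (k + 1)) (r (k + 1)) <
            valueFn (N := N) Aq Bq H h P Q R (xq k) (r k) ∨
          valueFn (N := N) Aq Bq H h P Q R (xq k) (r k) = 0) ∧
    (∀ k, valueFn (N := N) Aq Bq H h P Q R (xq k) (r k) = 0 →
      ∀ j, k ≤ j → valueFn (N := N) Aq Bq H h P Q R (xq j) (r j) = 0) := by
  have hVnn : ∀ k, 0 ≤ valueFn (N := N) Aq Bq H h P Q R (xq k) (r k) := fun k =>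
    valueFn_nonneg Aq H Bq P Q R h hP hQ hR (xq k) (r k)
  have hVeq : ∀ k, valueFn (N := N) Aq Bq H h P Q R (xq k) (r k) =
      mpcCost Aq Bq H h P Q R (xq k) (r k) (Ustar k) := by
    intro k
    refine le_antisymm (valueFn_le Aq H Bq P Q R h hP hQ hR (xq k) (r k) (hmem k)) ?_
    refine le_csInf ⟨_, ⟨Ustar k, hmem k, rfl⟩⟩ ?_
    rintro y ⟨U, hU, rfl⟩
    exact hmin k U hU
  have hstep : ∀ k, valueFn (N := N) Aq Bq H h P Q R (xq (k + 1)) (r (k + 1)) ≤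
      valueFn (N := N) Aq Bq H h P Q R (xq k) (r k) -
        (xq k - r k) ⬝ᵥ (Q *ᵥ (xq k - r k)) := by
    intro k
    have h1 : valueFn (N := N) Aq Bq H h P Q R (xq (k + 1)) (r (k + 1)) ≤
        mpcCost Aq Bq H h P Q R (xq (k + 1)) (r (k + 1)) (shiftSeq (Ustar k)) :=
      valueFn_le Aq H Bq P Q R h hP hQ hR _ _ (shiftSeq_mem_quantSet (hmem k))
    have h2 : mpcCost Aq Bq H h P Q R (xq (k + 1)) (r (k + 1)) (shiftSeq (Ustar k)) ≤
        mpcCost Aq Bq H h P Q R (xq k) (r k) (Ustar k) -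
          (xq k - r k) ⬝ᵥ (Q *ᵥ (xq k - r k)) := by
      rw [hx k, hr k]
      exact mpcCost_shift hN h Aq H Bq P Q R hR hA hneg (xq k) (r k) (Ustar k)
    rw [hVeq k]
    linarith
  constructor
  · intro k
    rcases eq_or_lt_of_le (hVnn k) with h0 | h0
    · exact Or.inr h0.symm
    · left
      have hne : xq k ≠ r k := by
        intro he
        have := valueFn_self (N := N) Aq H Bq P Q R h hA hP hQ hR (r k)
        rw [he] at h0
        linarith
      have hpos : 0 < (xq k - r k) ⬝ᵥ (Q *ᵥ (xq k - r k)) :=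
        quadPos hQ (sub_ne_zero.mpr hne)
      linarith [hstep k]
  · intro k hk j hkj
    induction j, hkj using Nat.le_induction with
    | base => exact hk
    | succ j hkj ih =>
        have hq0 : 0 ≤ (xq j - r j) ⬝ᵥ (Q *ᵥ (xq j - r j)) := quadNonneg hQ.posSemidef _
        have := hstep j
        rw [ih] at this
        exact le_antisymm (by linarith) (hVnn (j + 1))
end
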